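/- Let S = ⟨n₁, …, n_k⟩ be a numerical monoid with minimal generators n₁ < n₂ < ⋯ < n_k. A nonzero element x ∈ S satisfies ρ(x) = n_k/n₁ if and only if x is an integer multiple of lcm(n₁, n_k). Moreover, for every rational number r < n_k/n₁ there are only finitely many x ∈ S with ρ(x) ≤ r. -/

import Mathlib

/-- The numerical monoid generated by `n 0, …, n (k-1)`. -/
def NumMon {k : ℕ} (n : Fin k → ℕ) : Set ℕ := {x | ∃ c : Fin k → ℕ, ∑ i, c i * n i = x}

/-- The generating set is minimal: no generator lies in the submonoid
generated by the remaining generators. -/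
def MinimalGens {k : ℕ} (n : Fin k → ℕ) : Prop :=
  ∀ i, ¬ ∃ c : Fin k → ℕ, c i = 0 ∧ ∑ j, c j * n j = n i

/-- The set of factorization lengths of `x`. -/
def GLenSet {k : ℕ} (n : Fin k → ℕ) (x : ℕ) : Set ℕ :=
  {l | ∃ c : Fin k → ℕ, ∑ i, c i * n i = x ∧ ∑ i, c i = l}

/-- Maximum factorization length. -/
noncomputable def GLmax {k : ℕ} (n : Fin k → ℕ) (x : ℕ) : ℕ := sSup (GLenSet n x)

/-- Minimum factorization length. -/
noncomputable def GLmin {k : ℕ} (n : Fin k → ℕ) (x : ℕ) : ℕ := sInf (GLenSet n x)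

set_option maxHeartbeats 1000000

section Aux
variable {k : ℕ} {n : Fin k → ℕ}

/-- Trading helper: replacing blocks of `n t` copies of `n j` by `n j` copies of `n t`
preserves the represented element. -/
lemma sum_update_eq (t : Fin k) (c : Fin k → ℕ) :
    ∑ j, (Function.update (fun j => c j % n t) t
      (c t + ∑ j ∈ Finset.univ.erase t, (c j / n t) * n j)) j * n j
      = ∑ j, c j * n j := by
  set c' := Function.update (fun j => c j % n t) t
      (c t + ∑ j ∈ Finset.univ.erase t, (c j / n t) * n j) with hc'
  have ht : c' t = c t + ∑ j ∈ Finset.univ.erase t, (c j / n t) * n j :=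
    Function.update_self _ _ _
  have hne : ∀ j ∈ Finset.univ.erase t, c' j * n j = (c j % n t) * n j := by
    intro j hj
    rw [hc', Function.update_of_ne (Finset.ne_of_mem_erase hj)]
  rw [← Finset.add_sum_erase _ (fun j => c' j * n j) (Finset.mem_univ t),
      ← Finset.add_sum_erase _ (fun j => c j * n j) (Finset.mem_univ t),
      Finset.sum_congr rfl hne, ht, add_mul, Finset.sum_mul, add_assoc,
      ← Finset.sum_add_distrib]
  congr 1
  apply Finset.sum_congr rfl
  intro j hj
  have h := Nat.div_add_mod (c j) (n t)
  calc c j / n t * n j * n t + c j % n t * n j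
      = (n t * (c j / n t) + c j % n t) * n j := by ring
    _ = c j * n j := by rw [h]

lemma nonempty_GLenSet {x : ℕ} (hx : x ∈ NumMon n) : (GLenSet n x).Nonempty := by
  obtain ⟨c, hc⟩ := hx
  exact ⟨∑ i, c i, c, hc, rfl⟩

lemma len_mul_le (hk : 0 < k) (hmono : StrictMono n) {x l : ℕ} (hl : l ∈ GLenSet n x) :
    l * n ⟨0, hk⟩ ≤ x := by
  obtain ⟨c, hc, hcl⟩ := hl
  rw [← hcl, ← hc, Finset.sum_mul]
  refine Finset.sum_le_sum fun i _ => ?_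
  exact Nat.mul_le_mul_left _ (hmono.monotone (by simp [Fin.le_def]))

lemma le_len_mul (hk : 0 < k) (hmono : StrictMono n) {x l : ℕ} (hl : l ∈ GLenSet n x) :
    x ≤ l * n ⟨k - 1, Nat.sub_lt hk Nat.one_pos⟩ := by
  obtain ⟨c, hc, hcl⟩ := hl
  rw [← hcl, ← hc, Finset.sum_mul]
  refine Finset.sum_le_sum fun i _ => ?_
  refine Nat.mul_le_mul_left _ (hmono.monotone ?_)
  simp only [Fin.le_def]
  omega

lemma bddAbove_GLenSet (hk : 0 < k) (hpos : ∀ i, 0 < n i) (hmono : StrictMono n) (x : ℕ) :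
    BddAbove (GLenSet n x) := by
  refine ⟨x, fun l hl => ?_⟩
  have := len_mul_le hk hmono hl
  have := hpos ⟨0, hk⟩
  nlinarith

lemma GLmax_mem (hk : 0 < k) (hpos : ∀ i, 0 < n i) (hmono : StrictMono n) {x : ℕ}
    (hx : x ∈ NumMon n) : GLmax n x ∈ GLenSet n x :=
  Nat.sSup_mem (nonempty_GLenSet hx) (bddAbove_GLenSet hk hpos hmono x)

lemma GLmin_mem {x : ℕ} (hx : x ∈ NumMon n) : GLmin n x ∈ GLenSet n x :=
  Nat.sInf_mem (nonempty_GLenSet hx)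

lemma single_mem {x : ℕ} (t : Fin k) (h : n t ∣ x) : (x / n t) ∈ GLenSet n x := by
  refine ⟨Pi.single t (x / n t), ?_, ?_⟩
  · rw [Finset.sum_eq_single t]
    · rw [Pi.single_eq_same, Nat.div_mul_cancel h]
    · intro b _ hb; rw [Pi.single_eq_of_ne hb, zero_mul]
    · simp
  · rw [Finset.sum_eq_single t]
    · rw [Pi.single_eq_same]
    · intro b _ hb; rw [Pi.single_eq_of_ne hb]
    · simp

lemma GLmax_of_dvd (hk : 0 < k) (hpos : ∀ i, 0 < n i) (hmono : StrictMono n) {x : ℕ}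
    (hx : x ∈ NumMon n) (h : n ⟨0, hk⟩ ∣ x) : GLmax n x * n ⟨0, hk⟩ = x := by
  have h1 : GLmax n x * n ⟨0, hk⟩ ≤ x := len_mul_le hk hmono (GLmax_mem hk hpos hmono hx)
  have h2 : x / n ⟨0, hk⟩ ≤ GLmax n x :=
    le_csSup (bddAbove_GLenSet hk hpos hmono x) (single_mem _ h)
  have h3 : x = (x / n ⟨0, hk⟩) * n ⟨0, hk⟩ := (Nat.div_mul_cancel h).symm
  have := Nat.mul_le_mul_right (n ⟨0, hk⟩) h2
  omega

lemma GLmin_of_dvd (hk : 0 < k) (hmono : StrictMono n) {x : ℕ}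
    (hx : x ∈ NumMon n) (h : n ⟨k - 1, Nat.sub_lt hk Nat.one_pos⟩ ∣ x) :
    GLmin n x * n ⟨k - 1, Nat.sub_lt hk Nat.one_pos⟩ = x := by
  have h1 : x ≤ GLmin n x * n ⟨k - 1, Nat.sub_lt hk Nat.one_pos⟩ := le_len_mul hk hmono (GLmin_mem hx)
  have h2 : GLmin n x ≤ x / n ⟨k - 1, Nat.sub_lt hk Nat.one_pos⟩ := Nat.sInf_le (single_mem _ h)
  have h3 : x = (x / n ⟨k - 1, Nat.sub_lt hk Nat.one_pos⟩) * n ⟨k - 1, Nat.sub_lt hk Nat.one_pos⟩ := (Nat.div_mul_cancel h).symm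
  have := Nat.mul_le_mul_right (n ⟨k - 1, Nat.sub_lt hk Nat.one_pos⟩) h2
  omega

lemma one_le_GLmin {x : ℕ} (hx : x ∈ NumMon n) (hx0 : x ≠ 0) : 1 ≤ GLmin n x := by
  by_contra h
  obtain ⟨c, hc, hcl⟩ := GLmin_mem hx
  have hl0 : GLmin n x = 0 := by omega
  rw [hl0] at hcl
  apply hx0
  rw [← hc]
  apply Finset.sum_eq_zero
  intro i _
  have : c i = 0 := by
    have := Finset.sum_eq_zero_iff.mp hcl i (Finset.mem_univ i)
    exact this
  simp [this]


lemma max_lb (hk : 0 < k) (hpos : ∀ i, 0 < n i) (hmono : StrictMono n) {x : ℕ}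
    (hx : x ∈ NumMon n) :
    x ≤ GLmax n x * n ⟨0, hk⟩ + k * (n ⟨0, hk⟩ * n ⟨k - 1, Nat.sub_lt hk Nat.one_pos⟩) := by
  obtain ⟨c, hc⟩ := hx
  set t : Fin k := ⟨0, hk⟩ with htdef
  set c' := Function.update (fun j => c j % n t) t
      (c t + ∑ j ∈ Finset.univ.erase t, (c j / n t) * n j) with hc'
  have hsum : ∑ j, c' j * n j = x := by rw [hc', sum_update_eq]; exact hc
  have hmem : (∑ j, c' j) ∈ GLenSet n x := ⟨c', hsum, rfl⟩
  have hle : ∑ j, c' j ≤ GLmax n x := le_csSup (bddAbove_GLenSet hk hpos hmono x) hmem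
  have hct : c' t ≤ ∑ j, c' j :=
    Finset.single_le_sum (fun j _ => Nat.zero_le _) (Finset.mem_univ t)
  have hsplit : x = c' t * n t + ∑ j ∈ Finset.univ.erase t, c' j * n j := by
    rw [← hsum, Finset.add_sum_erase _ (fun j => c' j * n j) (Finset.mem_univ t)]
  have hrest : ∑ j ∈ Finset.univ.erase t, c' j * n j
      ≤ (Finset.univ.erase t).card * (n t * n ⟨k - 1, Nat.sub_lt hk Nat.one_pos⟩) := by
    rw [← smul_eq_mul]
    apply Finset.sum_le_card_nsmul
    intro j hj
    have h1 : c' j = c j % n t := by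
      rw [hc', Function.update_of_ne (Finset.ne_of_mem_erase hj)]
    have h2 : c' j ≤ n t := by rw [h1]; exact le_of_lt (Nat.mod_lt _ (hpos t))
    have h3 : n j ≤ n ⟨k - 1, Nat.sub_lt hk Nat.one_pos⟩ := by
      refine hmono.monotone ?_
      simp only [Fin.le_def]
      omega
    exact Nat.mul_le_mul h2 h3
  have hcard : (Finset.univ.erase t).card ≤ k := by
    exact (Finset.card_erase_le).trans (by simp)
  have : c' t * n t ≤ GLmax n x * n t := Nat.mul_le_mul_right _ (hct.trans hle)
  calc x = c' t * n t + ∑ j ∈ Finset.univ.erase t, c' j * n j := hsplit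
    _ ≤ GLmax n x * n t + (Finset.univ.erase t).card * (n t * n ⟨k - 1, Nat.sub_lt hk Nat.one_pos⟩) :=
        Nat.add_le_add this hrest
    _ ≤ GLmax n x * n t + k * (n t * n ⟨k - 1, Nat.sub_lt hk Nat.one_pos⟩) := by
        exact Nat.add_le_add_left (Nat.mul_le_mul_right _ hcard) _

lemma min_ub (hk : 0 < k) (hpos : ∀ i, 0 < n i) {x : ℕ} (hx : x ∈ NumMon n) :
    GLmin n x * n ⟨k - 1, Nat.sub_lt hk Nat.one_pos⟩ ≤ x + k * (n ⟨k - 1, Nat.sub_lt hk Nat.one_pos⟩ * n ⟨k - 1, Nat.sub_lt hk Nat.one_pos⟩) := by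
  obtain ⟨c, hc⟩ := hx
  set t : Fin k := ⟨k - 1, Nat.sub_lt hk Nat.one_pos⟩ with htdef
  set c' := Function.update (fun j => c j % n t) t
      (c t + ∑ j ∈ Finset.univ.erase t, (c j / n t) * n j) with hc'
  have hsum : ∑ j, c' j * n j = x := by rw [hc', sum_update_eq]; exact hc
  have hmem : (∑ j, c' j) ∈ GLenSet n x := ⟨c', hsum, rfl⟩
  have hle : GLmin n x ≤ ∑ j, c' j := Nat.sInf_le hmem
  have hsplit : ∑ j, c' j = c' t + ∑ j ∈ Finset.univ.erase t, c' j :=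
    (Finset.add_sum_erase _ c' (Finset.mem_univ t)).symm
  have hrest : ∑ j ∈ Finset.univ.erase t, c' j ≤ k * n t := by
    calc ∑ j ∈ Finset.univ.erase t, c' j ≤ (Finset.univ.erase t).card * n t := by
          rw [← smul_eq_mul]
          apply Finset.sum_le_card_nsmul
          intro j hj
          rw [hc', Function.update_of_ne (Finset.ne_of_mem_erase hj)]
          exact le_of_lt (Nat.mod_lt _ (hpos t))
      _ ≤ k * n t := Nat.mul_le_mul_right _ ((Finset.card_erase_le).trans (by simp))
  have hctx : c' t * n t ≤ x := by
    rw [← hsum, ← Finset.add_sum_erase _ (fun j => c' j * n j) (Finset.mem_univ t)]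
    exact Nat.le_add_right _ _
  calc GLmin n x * n t ≤ (c' t + k * n t) * n t := by
        apply Nat.mul_le_mul_right
        omega
    _ = c' t * n t + k * (n t * n t) := by ring
    _ ≤ x + k * (n t * n t) := Nat.add_le_add_right hctx _


end Aux

theorem numerical_monoid_elasticity_fine {k : ℕ} (hk : 0 < k)
    (n : Fin k → ℕ) (hpos : ∀ i, 0 < n i) (hmono : StrictMono n)
    (hmin : MinimalGens n) :
    (∀ x ∈ NumMon n, x ≠ 0 →
      ((GLmax n x : ℝ) / (GLmin n x : ℝ) = (n ⟨k - 1, by omega⟩ : ℝ) / (n ⟨0, hk⟩ : ℝ) ↔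
        Nat.lcm (n ⟨0, hk⟩) (n ⟨k - 1, by omega⟩) ∣ x)) ∧
    (∀ r : ℚ, (r : ℝ) < (n ⟨k - 1, by omega⟩ : ℝ) / (n ⟨0, hk⟩ : ℝ) →
      {x : ℕ | x ∈ NumMon n ∧ x ≠ 0 ∧ (GLmax n x : ℝ) / (GLmin n x : ℝ) ≤ (r : ℝ)}.Finite) := by
  have ha : 0 < n ⟨0, hk⟩ := hpos _
  have hb : 0 < n (⟨k - 1, by omega⟩ : Fin k) := hpos _
  constructor
  · intro x hx hx0
    have hm1 : 1 ≤ GLmin n x := one_le_GLmin hx hx0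
    have hmR : (0:ℝ) < (GLmin n x : ℝ) := by exact_mod_cast hm1
    have haR : (0:ℝ) < (n ⟨0, hk⟩ : ℝ) := by exact_mod_cast ha
    constructor
    · intro h
      rw [div_eq_div_iff (ne_of_gt hmR) (ne_of_gt haR)] at h
      have heq : GLmax n x * n ⟨0, hk⟩ = GLmin n x * n ⟨k - 1, by omega⟩ := by
        have : ((GLmax n x * n ⟨0, hk⟩ : ℕ) : ℝ)
            = ((GLmin n x * n ⟨k - 1, by omega⟩ : ℕ) : ℝ) := by push_cast; linarith
        exact_mod_cast this
      have h1 : GLmax n x * n ⟨0, hk⟩ ≤ x := len_mul_le hk hmono (GLmax_mem hk hpos hmono hx)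
      have h2 : x ≤ GLmin n x * n ⟨k - 1, by omega⟩ := le_len_mul hk hmono (GLmin_mem hx)
      have e1 : GLmax n x * n ⟨0, hk⟩ = x := by omega
      have e2 : GLmin n x * n ⟨k - 1, by omega⟩ = x := by omega
      exact Nat.lcm_dvd ⟨GLmax n x, by rw [mul_comm]; exact e1.symm⟩ ⟨GLmin n x, by rw [mul_comm]; exact e2.symm⟩
    · intro h
      have e1 : GLmax n x * n ⟨0, hk⟩ = x :=
        GLmax_of_dvd hk hpos hmono hx ((Nat.dvd_lcm_left _ _).trans h)
      have e2 : GLmin n x * n ⟨k - 1, by omega⟩ = x :=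
        GLmin_of_dvd hk hmono hx ((Nat.dvd_lcm_right _ _).trans h)
      rw [div_eq_div_iff (ne_of_gt hmR) (ne_of_gt haR)]
      have : ((GLmax n x * n ⟨0, hk⟩ : ℕ) : ℝ)
          = ((GLmin n x * n ⟨k - 1, by omega⟩ : ℕ) : ℝ) := by rw [e1, e2]
      push_cast at this
      linarith
  · intro r hr
    have haR : (0:ℝ) < (n ⟨0, hk⟩ : ℝ) := by exact_mod_cast ha
    have hbR : (0:ℝ) < (n (⟨k - 1, by omega⟩ : Fin k) : ℝ) := by exact_mod_cast hb
    have hab : (r:ℝ) * (n ⟨0, hk⟩ : ℝ) < (n (⟨k - 1, by omega⟩ : Fin k) : ℝ) :=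
      (lt_div_iff₀ haR).mp hr
    set A : ℝ := (k:ℝ) * ((n ⟨0, hk⟩ : ℝ) * (n (⟨k - 1, by omega⟩ : Fin k) : ℝ)) with hA
    set B : ℝ := (k:ℝ) * ((n (⟨k - 1, by omega⟩ : Fin k) : ℝ) * (n (⟨k - 1, by omega⟩ : Fin k) : ℝ)) with hB
    obtain ⟨N, hN⟩ := exists_nat_gt (((r:ℝ) * (n ⟨0, hk⟩ : ℝ) * B + A * (n (⟨k - 1, by omega⟩ : Fin k) : ℝ))
      / ((n (⟨k - 1, by omega⟩ : Fin k) : ℝ) - (r:ℝ) * (n ⟨0, hk⟩ : ℝ)))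
    apply Set.Finite.subset (Set.finite_Iio N)
    rintro x ⟨hx, hx0, hρ⟩
    simp only [Set.mem_Iio]
    by_contra hxN
    push_neg at hxN
    have hxNR : (N:ℝ) ≤ (x:ℝ) := by exact_mod_cast hxN
    have hm1 : 1 ≤ GLmin n x := one_le_GLmin hx hx0
    have hmR : (0:ℝ) < (GLmin n x : ℝ) := by exact_mod_cast hm1
    have hr0 : (0:ℝ) ≤ (r:ℝ) :=
      le_trans (div_nonneg (Nat.cast_nonneg _) (Nat.cast_nonneg _)) hρ
    have hMr : (GLmax n x : ℝ) ≤ (r:ℝ) * (GLmin n x : ℝ) := by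
      rw [div_le_iff₀ hmR] at hρ; linarith
    have h9 : (x:ℝ) ≤ (GLmax n x : ℝ) * (n ⟨0, hk⟩ : ℝ) + A := by
      have := max_lb hk hpos hmono hx
      rw [hA]; push_cast; exact_mod_cast this
    have h10 : (GLmin n x : ℝ) * (n (⟨k - 1, by omega⟩ : Fin k) : ℝ) ≤ (x:ℝ) + B := by
      have := min_ub hk hpos hx
      rw [hB]; push_cast; exact_mod_cast this
    have e1 : (x:ℝ) * (n (⟨k - 1, by omega⟩ : Fin k) : ℝ)
        ≤ ((GLmax n x : ℝ) * (n ⟨0, hk⟩ : ℝ) + A) * (n (⟨k - 1, by omega⟩ : Fin k) : ℝ) :=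
      mul_le_mul_of_nonneg_right h9 hbR.le
    have e2 : (GLmax n x : ℝ) * (n (⟨k - 1, by omega⟩ : Fin k) : ℝ)
        ≤ (r:ℝ) * ((GLmin n x : ℝ) * (n (⟨k - 1, by omega⟩ : Fin k) : ℝ)) := by
      have := mul_le_mul_of_nonneg_right hMr hbR.le
      linarith [this]
    have e3 : (r:ℝ) * ((GLmin n x : ℝ) * (n (⟨k - 1, by omega⟩ : Fin k) : ℝ))
        ≤ (r:ℝ) * ((x:ℝ) + B) := mul_le_mul_of_nonneg_left h10 hr0
    have e4 := mul_le_mul_of_nonneg_right (e2.trans e3) haR.le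
    have key : (x:ℝ) * ((n (⟨k - 1, by omega⟩ : Fin k) : ℝ) - (r:ℝ) * (n ⟨0, hk⟩ : ℝ))
        ≤ (r:ℝ) * (n ⟨0, hk⟩ : ℝ) * B + A * (n (⟨k - 1, by omega⟩ : Fin k) : ℝ) := by
      nlinarith [e1, e4]
    have hpos' : (0:ℝ) < (n (⟨k - 1, by omega⟩ : Fin k) : ℝ) - (r:ℝ) * (n ⟨0, hk⟩ : ℝ) := by
      linarith
    have hx_le : (x:ℝ) ≤ ((r:ℝ) * (n ⟨0, hk⟩ : ℝ) * B + A * (n (⟨k - 1, by omega⟩ : Fin k) : ℝ))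
        / ((n (⟨k - 1, by omega⟩ : Fin k) : ℝ) - (r:ℝ) * (n ⟨0, hk⟩ : ℝ)) :=
      (le_div_iff₀ hpos').mpr key
    linarith
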